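/- Let Y be a semilattice (a commutative band). Then the free idempotent generated semigroup IG(Y) is abundant: every R*-class and every L*-class of IG(Y) contains an idempotent. -/

import Mathlib

/-! Common definitions: free idempotent generated semigroups over bands,
generalised Green's relations, and abundancy notions. -/

/-- `(e, f)` is a *basic pair* if `ef ∈ {e,f}` or `fe ∈ {e,f}`. -/
def basicPair {B : Type*} [Mul B] (e f : B) : Prop :=
  e * f = e ∨ e * f = f ∨ f * e = e ∨ f * e = f

/-- The defining congruence of the free idempotent generated semigroup `IG B`:
the congruence on the free semigroup on `{ē : e ∈ B}` generated by the relations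
`ē f̄ = (ef)‾` for basic pairs `(e, f)`. -/
def igCon (B : Type*) [Semigroup B] : Con (FreeSemigroup B) :=
  conGen fun w₁ w₂ => ∃ e f : B, basicPair e f ∧
    w₁ = FreeSemigroup.of e * FreeSemigroup.of f ∧ w₂ = FreeSemigroup.of (e * f)

/-- The free idempotent generated semigroup over a band `B`. -/
abbrev IG (B : Type*) [Semigroup B] := (igCon B).Quotient

/-- The canonical generator `ē` of `IG B`. -/
def igOf {B : Type*} [Semigroup B] (e : B) : IG B :=
  ((FreeSemigroup.of e : FreeSemigroup B) : (igCon B).Quotient)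

/-- `prodSeq x a b = x a * x (a+1) * ⋯ * x b` (it is `x a` when `b ≤ a`). -/
def prodSeq {M : Type*} [Mul M] (x : ℕ → M) (a b : ℕ) : M :=
  (List.range (b - a)).foldl (fun acc i => acc * x (a + i + 1)) (x a)

/-- The word `x̄_a x̄_{a+1} ⋯ x̄_b` in the free semigroup on `{ē : e ∈ B}`. -/
def freeWord {B : Type*} (x : ℕ → B) (a b : ℕ) : FreeSemigroup B :=
  prodSeq (fun i => FreeSemigroup.of (x i)) a b

/-- The element `x̄_a x̄_{a+1} ⋯ x̄_b` of `IG B`. -/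
def igWord {B : Type*} [Semigroup B] (x : ℕ → B) (a b : ℕ) : IG B :=
  ((freeWord x a b : FreeSemigroup B) : (igCon B).Quotient)

/-- Green's relation `𝓡`: `a 𝓡 b` iff `a = b` or `as = b`, `bt = a` for some `s, t`. -/
def GreenR {S : Type*} [Semigroup S] (a b : S) : Prop :=
  a = b ∨ ∃ s t : S, a * s = b ∧ b * t = a

/-- Green's relation `𝓛`: `a 𝓛 b` iff `a = b` or `sa = b`, `tb = a` for some `s, t`. -/
def GreenL {S : Type*} [Semigroup S] (a b : S) : Prop :=
  a = b ∨ ∃ s t : S, s * a = b ∧ t * b = a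

/-- `a 𝓡* b` iff for all `x, y ∈ S¹`, `xa = ya ↔ xb = yb`. -/
def RStar {S : Type*} [Semigroup S] (a b : S) : Prop :=
  ∀ x y : WithOne S,
    x * (a : WithOne S) = y * (a : WithOne S) ↔ x * (b : WithOne S) = y * (b : WithOne S)

/-- `a 𝓛* b` iff for all `x, y ∈ S¹`, `ax = ay ↔ bx = by`. -/
def LStar {S : Type*} [Semigroup S] (a b : S) : Prop :=
  ∀ x y : WithOne S,
    (a : WithOne S) * x = (a : WithOne S) * y ↔ (b : WithOne S) * x = (b : WithOne S) * y

/-- `a 𝓡̃ b` iff for every idempotent `e`, `ea = a ↔ eb = b`. -/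
def RTilde {S : Type*} [Semigroup S] (a b : S) : Prop :=
  ∀ e : S, IsIdempotentElem e → (e * a = a ↔ e * b = b)

/-- `a 𝓛̃ b` iff for every idempotent `e`, `ae = a ↔ be = b`. -/
def LTilde {S : Type*} [Semigroup S] (a b : S) : Prop :=
  ∀ e : S, IsIdempotentElem e → (a * e = a ↔ b * e = b)

/-- A semigroup is *abundant* if every `𝓡*`-class and every `𝓛*`-class
contains an idempotent. -/
def Abundant (S : Type*) [Semigroup S] : Prop :=
  ∀ a : S, (∃ e : S, IsIdempotentElem e ∧ RStar a e) ∧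
    (∃ e : S, IsIdempotentElem e ∧ LStar a e)

/-- A semigroup is *weakly abundant* if every `𝓡̃`-class and every `𝓛̃`-class
contains an idempotent. -/
def WeaklyAbundant (S : Type*) [Semigroup S] : Prop :=
  ∀ a : S, (∃ e : S, IsIdempotentElem e ∧ RTilde a e) ∧
    (∃ e : S, IsIdempotentElem e ∧ LTilde a e)

/-- On a band, `x` and `y` are `𝒟`-equivalent iff `xyx = x` and `yxy = y`. -/
def dEquiv {B : Type*} [Mul B] (x y : B) : Prop :=
  x * y * x = x ∧ y * x * y = y

/-- On a band, `x` and `y` are `𝒥`-incomparable iff `xyx ≠ x` and `yxy ≠ y`. -/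
def jIncomp {B : Type*} [Mul B] (x y : B) : Prop :=
  x * y * x ≠ x ∧ y * x * y ≠ y

/-- One step of the reduction system induced by the presentation of `IG B`:
replace a factor `ē f̄`, with `(e,f)` a basic pair, by `(ef)‾`. -/
def RedStep {B : Type*} [Semigroup B] (w w' : FreeSemigroup B) : Prop :=
  ∃ (p q : List B) (e f : B), basicPair e f ∧
    w.head :: w.tail = p ++ e :: f :: q ∧
    w'.head :: w'.tail = p ++ (e * f) :: q

/-- A word is in *normal form* (irreducible) if no reduction step applies. -/
def IsNF {B : Type*} [Semigroup B] (w : FreeSemigroup B) : Prop :=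
  ∀ w', ¬ RedStep w w'

/-- `x̄₁ ⋯ x̄ₙ` (letters `x 1, …, x n`) is in *almost normal form* witnessed by
block boundaries `idx 0 = 0 < idx 1 < ⋯ < idx r = n`: within each block all
letters are `𝒟`-equivalent, and letters in adjacent blocks are incomparable. -/
def AlmostNF {B : Type*} [Mul B] (x : ℕ → B) (n r : ℕ) (idx : ℕ → ℕ) : Prop :=
  1 ≤ r ∧ idx 0 = 0 ∧ idx r = n ∧
  (∀ k < r, idx k < idx (k + 1)) ∧
  (∀ k < r, ∀ p q : ℕ, idx k < p → p ≤ idx (k + 1) → idx k < q → q ≤ idx (k + 1) →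
    dEquiv (x p) (x q)) ∧
  (∀ k : ℕ, k + 1 < r → ∀ p q : ℕ, idx k < p → p ≤ idx (k + 1) →
    idx (k + 1) < q → q ≤ idx (k + 2) → jIncomp (x p) (x q))

/-- Condition (P) for `IG B`. -/
def CondP (B : Type*) [Semigroup B] : Prop :=
  ∀ (n m r : ℕ) (u v : ℕ → B) (iu iv : ℕ → ℕ),
    AlmostNF u n r iu → AlmostNF v m r iv →
    igWord u 1 n = igWord v 1 m →
    ((∀ s : ℕ, 1 ≤ s → s ≤ r →
        (u (iu s) * v (iv s) = u (iu s) ∧ v (iv s) * u (iu s) = v (iv s)) →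
        igWord u 1 (iu s) = igWord v 1 (iv s)) ∧
      (∀ t : ℕ, t + 1 ≤ r →
        (u (iu t + 1) * v (iv t + 1) = v (iv t + 1) ∧
          v (iv t + 1) * u (iu t + 1) = u (iu t + 1)) →
        igWord u (iu t + 1) n = igWord v (iv t + 1) m))

/-- A normal band is *pliant* if for every `𝒟`-class `D` there is `c ∈ D` with
`u e u = c` for every `e ∈ D` and every `u` strictly `𝒥`-above `D`. -/
def Pliant (B : Type*) [Mul B] : Prop :=
  ∀ d : B, ∃ c : B, dEquiv c d ∧
    ∀ e u : B, dEquiv e d → (e * u * e = e ∧ u * e * u ≠ u) → u * e * u = c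

set_option linter.unusedSectionVars false
set_option linter.unusedVariables false


section Model
variable {Y : Type*} [Semigroup Y]

/-- comparability -/
def cmpb (e f : Y) : Prop := e * f = e ∨ e * f = f

open Classical in
noncomputable def push (e : Y) : List Y → List Y
  | [] => [e]
  | d :: t => if cmpb e d then push (e * d) t else e :: d :: t

noncomputable def lmul (p z : List Y) : List Y := List.foldr push z p

def Red (l : List Y) : Prop := List.Chain' (fun a b => ¬ cmpb a b) l

variable (hcomm : ∀ a b : Y, a * b = b * a) (hidem : ∀ a : Y, a * a = a)

theorem push_nil (e : Y) : push e [] = [e] := rfl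

theorem push_cons_pos {e d : Y} (h : cmpb e d) (t : List Y) :
    push e (d :: t) = push (e * d) t := by
  classical simp [push, h]

theorem push_cons_neg {e d : Y} (h : ¬ cmpb e d) (t : List Y) :
    push e (d :: t) = e :: d :: t := by
  classical simp [push, h]

theorem push_ne_nil (e : Y) : ∀ t : List Y, push e t ≠ [] := by
  intro t
  induction t generalizing e with
  | nil => simp [push]
  | cons d t ih =>
    by_cases h : cmpb e d
    · rw [push_cons_pos h]; exact ih _
    · rw [push_cons_neg h]; simp

theorem red_push {e : Y} {t : List Y} (ht : Red t) : Red (push e t) := by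
  induction t generalizing e with
  | nil => simp [push, Red, List.Chain']
  | cons d t ih =>
    by_cases h : cmpb e d
    · rw [push_cons_pos h]; exact ih ht.tail
    · rw [push_cons_neg h]
      exact List.IsChain.cons_cons h ht

theorem red_lmul {p z : List Y} (hz : Red z) : Red (lmul p z) := by
  induction p with
  | nil => exact hz
  | cons e p ih => exact red_push ih

theorem lmul_ne_nil {p z : List Y} (hz : z ≠ []) : lmul p z ≠ [] := by
  cases p with
  | nil => exact hz
  | cons e p => exact push_ne_nil _ _

include hcomm in
theorem cmpb_symm {a b : Y} (h : cmpb a b) : cmpb b a := by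
  rcases h with h | h
  · exact Or.inr (by rw [hcomm]; exact h)
  · exact Or.inl (by rw [hcomm]; exact h)

/-- Lemma A': merging before pushing. -/
theorem push_push : ∀ (t : List Y), Red t → ∀ e d : Y, cmpb e d →
    push e (push d t) = push (e * d) t := by
  intro t
  induction t with
  | nil =>
    intro _ e d hed
    rw [push_nil, push_cons_pos hed, push_nil]
  | cons f t' ih =>
    intro hred e d hed
    by_cases hdf : cmpb d f
    · rcases hdf with hdf1 | hdf2
      · -- d * f = d
        rw [push_cons_pos (Or.inl hdf1), hdf1,
            push_cons_pos (show cmpb (e*d) f from Or.inl (by rw [mul_assoc, hdf1]))]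
        rw [mul_assoc, hdf1]
        exact ih hred.tail e d hed
      · -- d * f = f : push d (f::t') = push f t' = f :: t' = t
        have hft' : push d (f :: t') = f :: t' := by
          rw [push_cons_pos (Or.inr hdf2), hdf2]
          cases t' with
          | nil => rfl
          | cons g t'' =>
            rw [push_cons_neg]
            exact (List.isChain_cons_cons.1 hred).1
        rw [hft']
        rcases hed with hed1 | hed2
        · rw [hed1]
        · -- e * d = d
          have hef : e * f = f := by
            have : e * f = e * (d * f) := by rw [hdf2]
            rw [this, ← mul_assoc, hed2, hdf2]
          rw [push_cons_pos (Or.inr hef), hef, hed2, push_cons_pos (Or.inr hdf2), hdf2]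
    · rw [push_cons_neg hdf, push_cons_pos hed]

/-- Lemma D'. -/
theorem lmul_push {z : List Y} (hz : Red z) :
    ∀ (s : List Y) (e : Y), lmul (push e s) z = push e (lmul s z) := by
  intro s
  induction s with
  | nil => intro e; rfl
  | cons d s' ih =>
    intro e
    by_cases hed : cmpb e d
    · rw [push_cons_pos hed, ih (e * d)]
      have : lmul (d :: s') z = push d (lmul s' z) := rfl
      rw [this, push_push _ (red_lmul hz) e d hed]
    · rw [push_cons_neg hed]; rfl

/-- Lemma C. -/
theorem lmul_lmul {z : List Y} (hz : Red z) :
    ∀ (u v : List Y), lmul (lmul u v) z = lmul u (lmul v z) := by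
  intro u v
  induction u with
  | nil => rfl
  | cons e u' ih =>
    show lmul (push e (lmul u' v)) z = push e (lmul u' (lmul v z))
    rw [lmul_push hz, ih]

/-- Lemma K : pushing a reduced block that doesn't interact. -/
theorem lmul_of_red : ∀ (u : List Y) (h : Y) (z' : List Y), Red (u ++ [h]) →
    lmul u (h :: z') = u ++ h :: z' := by
  intro u
  induction u with
  | nil => intro h z' _; rfl
  | cons w u' ih =>
    intro h z' hred
    show push w (lmul u' (h :: z')) = w :: (u' ++ h :: z')
    rw [ih h z' hred.tail]
    cases u' with
    | nil =>
      refine push_cons_neg ?_ _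
      have := List.isChain_cons_cons.1 hred
      exact this.1
    | cons x u'' =>
      refine push_cons_neg ?_ _
      have := List.isChain_cons_cons.1 hred
      exact this.1

/-- `l` ends with a letter below `c`. -/
def LastLe (l : List Y) (c : Y) : Prop := ∃ u d, l = u ++ [d] ∧ d * c = d

theorem lastLe_push {t : List Y} {c : Y} (ht : LastLe t c) (e : Y) :
    LastLe (push e t) c := by
  obtain ⟨u, d, rfl, hdc⟩ := ht
  induction u generalizing e with
  | nil =>
    by_cases h : cmpb e d
    · rw [List.nil_append, push_cons_pos h, push_nil]
      exact ⟨[], e * d, rfl, by rw [mul_assoc, hdc]⟩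
    · rw [List.nil_append, push_cons_neg h]
      exact ⟨[e], d, rfl, hdc⟩
  | cons x u ih =>
    by_cases h : cmpb e x
    · rw [List.cons_append, push_cons_pos h]
      exact ih (e * x)
    · rw [List.cons_append, push_cons_neg h]
      exact ⟨e :: x :: u, d, rfl, hdc⟩

theorem lastLe_lmul {z : List Y} {c : Y} (hz : LastLe z c) (p : List Y) :
    LastLe (lmul p z) c := by
  induction p with
  | nil => exact hz
  | cons e p ih => exact lastLe_push ih e

include hcomm in
/-- Lemma J1: cascade structure of pushing a small letter into a reduced word. -/
theorem push_cascade : ∀ (t : List Y), Red t → ∀ (b d : Y), d * b = d →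
    (∀ g, t.head? = some g → ¬ cmpb b g) →
    ∃ k ≤ t.length, push d t = d :: t.drop k ∧
      ∀ i, i < k → ∀ (hi : i < t.length), d * t[i] = d := by
  intro t
  induction t with
  | nil =>
    intro _ b d _ _
    exact ⟨0, by simp, rfl, by omega⟩
  | cons g t' ih =>
    intro hred b d hdb hhead
    by_cases hdg : cmpb d g
    · have hdg' : d * g = d := by
        rcases hdg with h | h
        · exact h
        · exfalso
          refine hhead g rfl (Or.inr ?_)
          have hgd : g * d = g := by rw [hcomm]; exact h
          have : g * b = g := by
            calc g * b = (g * d) * b := by rw [hgd]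
            _ = g * (d * b) := by rw [mul_assoc]
            _ = g * d := by rw [hdb]
            _ = g := hgd
          rw [hcomm]; exact this
      rw [push_cons_pos hdg, hdg']
      obtain ⟨k', hk'le, hpush, hk'⟩ := ih hred.tail g d hdg'
        (fun g' hg' => (List.isChain_cons.1 hred).1 g' hg')
      refine ⟨k' + 1, by simpa using hk'le, by simpa using hpush, ?_⟩
      intro i hik hi
      cases i with
      | zero => simpa using hdg'
      | succ j =>
        have hj : j < t'.length := by simpa using hi
        have := hk' j (by omega) hj
        simpa using this
    · exact ⟨0, by simp, push_cons_neg hdg _, by omega⟩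

include hcomm in
/-- Lemma J: decomposition of a product when the left factor ends below `c`. -/
theorem lmul_decomp {P₀ t : List Y} {d c : Y} (hP : Red (P₀ ++ [d])) (hdc : d * c = d)
    (hct : Red (c :: t)) :
    ∃ k ≤ t.length, lmul (P₀ ++ [d]) t = (P₀ ++ [d]) ++ t.drop k ∧
      ∀ i, i < k → ∀ (hi : i < t.length), d * t[i] = d := by
  obtain ⟨k, hkle, hpush, hk⟩ := push_cascade hcomm t hct.tail c d hdc
    (fun g hg => by
      have := (List.isChain_cons.1 hct).1 g hg
      exact this)
  refine ⟨k, hkle, ?_, hk⟩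
  have h1 : lmul (P₀ ++ [d]) t = lmul P₀ (push d t) := by
    simp [lmul, List.foldr_append]
  rw [h1, hpush, lmul_of_red P₀ d _ hP, List.append_assoc]
  rfl


theorem getElem_idx_congr {α : Type*} {l : List α} {i j : ℕ} (h : i = j) (hi : i < l.length) :
    l[i]'hi = l[j]'(h ▸ hi) := by subst h; rfl

include hcomm in
/-- Core comparison: if both sides decompose over the same tail, the prefixes agree. -/
theorem prefix_eq {c : Y} {t P Q Q₀ : List Y} {dQ : Y} {kP kQ : ℕ}
    (hct : Red (c :: t))
    (hQ : Q = Q₀ ++ [dQ]) (hdQc : dQ * c = dQ)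
    (hkP : kP ≤ t.length) (hkQ : kQ ≤ t.length) (hle : kP ≤ kQ)
    (heq : P ++ t.drop kP = Q ++ t.drop kQ)
    (hQk : ∀ i, i < kQ → ∀ (hi : i < t.length), dQ * t[i] = dQ) :
    P = Q := by
  rcases Nat.eq_or_lt_of_le hle with rfl | hlt
  · exact List.append_cancel_right heq
  · exfalso
    set m := kQ - kP with hm
    have hm1 : 1 ≤ m := by omega
    have hsplit : t.drop kP = (t.drop kP).take m ++ t.drop kQ := by
      have h := List.take_append_drop m (t.drop kP)
      rw [List.drop_drop, show kP + m = kQ from by omega] at h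
      exact h.symm
    have heq2 : (P ++ (t.drop kP).take m) ++ t.drop kQ = Q ++ t.drop kQ := by
      rw [List.append_assoc, ← hsplit]; exact heq
    have hQeq : Q₀ ++ [dQ] = P ++ (t.drop kP).take m := by
      rw [← hQ]; exact (List.append_cancel_right heq2).symm
    have hSlen : ((t.drop kP).take m).length = m := by
      rw [List.length_take, List.length_drop]; omega
    have hSne : (t.drop kP).take m ≠ [] := by
      intro h; rw [h] at hSlen; simp at hSlen; omega
    have hkQ1 : kQ - 1 < t.length := by omega
    -- the last letter of Q is t[kQ - 1]
    have hlastQ : dQ = t[kQ - 1] := by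
      have h1 := congrArg List.getLast? hQeq
      rw [List.getLast?_concat, List.getLast?_append,
          List.getLast?_eq_getLast hSne, Option.some_or] at h1
      have h2 : ((t.drop kP).take m).getLast hSne = t[kQ - 1] := by
        rw [List.getLast_eq_getElem]
        rw [getElem_idx_congr (show (List.take m (t.drop kP)).length - 1 = m - 1 by rw [hSlen])]
        rw [List.getElem_take, List.getElem_drop]
        exact getElem_idx_congr (by omega) _
      rw [h2] at h1
      exact Option.some_injective _ h1
    rcases Nat.lt_or_ge kQ 2 with h2 | h2
    · -- kQ = 1 : t[0] comparable with c, contradiction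
      have htne : t ≠ [] := by
        intro h; subst h; simp at hkQ; omega
      obtain ⟨a, s, rfl⟩ := List.exists_cons_of_ne_nil htne
      have hhead : ¬ cmpb c a := (List.isChain_cons_cons.1 hct).1
      apply hhead
      right
      have hkQeq : kQ = 1 := by omega
      have ha : dQ = a := by
        rw [hlastQ, getElem_idx_congr (show kQ - 1 = 0 by omega)]; rfl
      rw [← ha, hcomm]
      exact hdQc
    · -- kQ ≥ 2 : adjacent letters of t would be comparable
      have hk2 : kQ - 2 < t.length := by omega
      have hcmp := hQk (kQ - 2) (by omega) hk2
      rw [hlastQ] at hcmp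
      have hred_t : Red t := hct.tail
      have hadj := (List.isChain_iff_getElem.1 hred_t) (kQ - 2) (by omega)
      apply hadj
      right
      rw [hcomm]
      rw [getElem_idx_congr (show kQ - 2 + 1 = kQ - 1 by omega)]
      exact hcmp

include hcomm hidem in
/-- The key cancellation lemma: multiplying by a reduced word `c :: t` on the right
determines multiplication by its first letter. -/
theorem lmul_key {p q : List Y} {c : Y} {t : List Y}
    (hct : Red (c :: t)) (h : lmul p (c :: t) = lmul q (c :: t)) :
    lmul p [c] = lmul q [c] := by
  have hredc : Red [c] := List.isChain_singleton c
  have hlastc : LastLe ([c] : List Y) c := ⟨[], c, rfl, hidem c⟩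
  have hct' : push c t = c :: t := by
    cases t with
    | nil => rfl
    | cons g t' => exact push_cons_neg (List.isChain_cons_cons.1 hct).1 _
  have hstep : ∀ r : List Y, lmul r (c :: t) = lmul (lmul r [c]) t := by
    intro r
    have htr : Red t := hct.tail
    rw [lmul_lmul htr r [c]]
    show lmul r (c :: t) = lmul r (push c t)
    rw [hct']
  obtain ⟨P₀, dP, hPeq, hdPc⟩ := lastLe_lmul hlastc p
  obtain ⟨Q₀, dQ, hQeq, hdQc⟩ := lastLe_lmul hlastc q
  have hPr : Red (P₀ ++ [dP]) := hPeq ▸ red_lmul hredc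
  have hQr : Red (Q₀ ++ [dQ]) := hQeq ▸ red_lmul hredc
  obtain ⟨kP, hkP, hdecP, hvalP⟩ := lmul_decomp hcomm hPr hdPc hct
  obtain ⟨kQ, hkQ, hdecQ, hvalQ⟩ := lmul_decomp hcomm hQr hdQc hct
  have hE : (P₀ ++ [dP]) ++ t.drop kP = (Q₀ ++ [dQ]) ++ t.drop kQ := by
    rw [← hdecP, ← hdecQ, ← hPeq, ← hQeq, ← hstep, ← hstep]
    exact h
  rw [hPeq, hQeq]
  rcases le_total kP kQ with hle | hle
  · exact prefix_eq hcomm hct rfl hdQc hkP hkQ hle hE hvalQ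
  · exact (prefix_eq hcomm hct rfl hdPc hkQ hkP hle hE.symm hvalP).symm

/-! ### The `IG` layer -/

include hcomm in
theorem basic_cmpb {e f : Y} (h : basicPair e f) : cmpb e f := by
  rcases h with h | h | h | h
  · exact Or.inl h
  · exact Or.inr h
  · exact Or.inl (by rw [hcomm]; exact h)
  · exact Or.inr (by rw [hcomm]; exact h)

theorem cmpb_basic {e f : Y} (h : cmpb e f) : basicPair e f := by
  rcases h with h | h
  · exact Or.inl h
  · exact Or.inr (Or.inl h)

theorem basic_symm {e f : Y} (h : basicPair e f) : basicPair f e := by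
  rcases h with h | h | h | h
  · exact Or.inr (Or.inr (Or.inr h))
  · exact Or.inr (Or.inr (Or.inl h))
  · exact Or.inr (Or.inl h)
  · exact Or.inl h

theorem ig_basic {e f : Y} (h : basicPair e f) :
    igOf e * igOf f = igOf (e * f) := by
  show ((FreeSemigroup.of e : FreeSemigroup Y) : IG Y) * (FreeSemigroup.of f) =
    ((FreeSemigroup.of (e * f) : FreeSemigroup Y) : IG Y)
  rw [← Con.coe_mul]
  exact (Con.eq _).2 (ConGen.Rel.of _ _ ⟨e, f, h, rfl, rfl⟩)

def toL (w : FreeSemigroup Y) : List Y := w.head :: w.tail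

theorem toL_mul (u v : FreeSemigroup Y) : toL (u * v) = toL u ++ toL v := rfl

noncomputable def redF (w : FreeSemigroup Y) : List Y := lmul (toL w) []

theorem redF_of (e : Y) : redF (FreeSemigroup.of e) = [e] := rfl

theorem redF_red (w : FreeSemigroup Y) : Red (redF w) := red_lmul List.isChain_nil

theorem redF_ne (w : FreeSemigroup Y) : redF w ≠ [] := push_ne_nil _ _

theorem redF_mul (u v : FreeSemigroup Y) : redF (u * v) = lmul (redF u) (redF v) := by
  have h1 : redF (u * v) = lmul (toL u) (redF v) := by
    show List.foldr push [] (toL (u * v)) = _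
    rw [toL_mul, List.foldr_append]
    rfl
  rw [h1]
  exact (lmul_lmul (redF_red v) (toL u) []).symm

noncomputable instance listMul : Mul (List Y) := ⟨fun u v => lmul u v⟩

theorem redF_mul' (u v : FreeSemigroup Y) : redF (u * v) = redF u * redF v :=
  redF_mul u v

include hcomm in
theorem igCon_le_ker : igCon Y ≤ Con.ker (⟨redF (Y := Y), redF_mul'⟩ : FreeSemigroup Y →ₙ* List Y) := by
  apply Con.conGen_le.2
  rintro w₁ w₂ ⟨e, f, hb, rfl, rfl⟩
  show redF _ = redF _
  rw [redF_mul, redF_of, redF_of, redF_of]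
  show push e (push f []) = [e * f]
  rw [push_nil, push_cons_pos (basic_cmpb hcomm hb), push_nil]

noncomputable def phi : IG Y → List Y :=
  fun a => Con.liftOn a redF (fun _ _ h => igCon_le_ker hcomm h)

theorem phi_coe (w : FreeSemigroup Y) : phi hcomm (↑w) = redF w := rfl

theorem phi_mul (a b : IG Y) : phi hcomm (a * b) = lmul (phi hcomm a) (phi hcomm b) :=
  Con.induction_on₂ a b fun u v => by
    rw [← Con.coe_mul]
    show redF (u * v) = lmul (redF u) (redF v)
    exact redF_mul u v

theorem phi_red (a : IG Y) : Red (phi hcomm a) :=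
  Con.induction_on a fun w => redF_red w

theorem phi_ne (a : IG Y) : phi hcomm a ≠ [] :=
  Con.induction_on a fun w => redF_ne w

theorem phi_igOf (e : Y) : phi hcomm (igOf e) = [e] := rfl

noncomputable def sigL : List Y → WithOne (IG Y) :=
  fun l => (l.map (fun e => ((igOf e : IG Y) : WithOne (IG Y)))).prod

theorem sigL_nil : sigL ([] : List Y) = 1 := rfl

theorem sigL_cons (e : Y) (t : List Y) :
    sigL (e :: t) = ((igOf e : IG Y) : WithOne (IG Y)) * sigL t := by
  simp [sigL]

theorem sigL_push (e : Y) (t : List Y) :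
    sigL (push e t) = ((igOf e : IG Y) : WithOne (IG Y)) * sigL t := by
  induction t generalizing e with
  | nil => simp [push, sigL]
  | cons d t ih =>
    by_cases h : cmpb e d
    · rw [push_cons_pos h, ih (e * d), sigL_cons, ← mul_assoc]
      congr 1
      rw [← WithOne.coe_mul, ig_basic (cmpb_basic h)]
    · rw [push_cons_neg h, sigL_cons, sigL_cons]

theorem sigL_lmul (p w : List Y) : sigL (lmul p w) = sigL p * sigL w := by
  induction p with
  | nil => rw [sigL_nil, one_mul]; rfl
  | cons e p ih =>
    show sigL (push e (lmul p w)) = sigL (e :: p) * sigL w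
    rw [sigL_push, ih, sigL_cons, mul_assoc]

theorem sigL_phi (a : IG Y) : sigL (phi hcomm a) = (a : WithOne (IG Y)) := by
  refine Con.induction_on a ?_
  intro w
  induction w using FreeSemigroup.recOnMul with
  | ih1 e =>
    rw [phi_coe]
    show sigL [e] = _
    rw [sigL_cons, sigL_nil, mul_one]
    rfl
  | ih2 u v hu hv =>
    calc sigL (phi hcomm ↑(FreeSemigroup.of u * v))
        = sigL (lmul (phi hcomm ↑(FreeSemigroup.of u)) (phi hcomm ↑v)) := by
          rw [Con.coe_mul, phi_mul]
      _ = sigL (phi hcomm ↑(FreeSemigroup.of u)) * sigL (phi hcomm ↑v) := sigL_lmul _ _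
      _ = (↑(↑(FreeSemigroup.of u) : IG Y) : WithOne (IG Y)) * ↑(↑v : IG Y) := by
          rw [hu, hv]
      _ = _ := by rw [← WithOne.coe_mul, ← Con.coe_mul]

include hcomm hidem in
theorem main_R (a : IG Y) : ∃ c : Y, IsIdempotentElem (igOf c : IG Y) ∧ RStar a (igOf c) := by
  obtain ⟨c, t, hl⟩ := List.exists_cons_of_ne_nil (phi_ne hcomm a)
  have hidc : IsIdempotentElem (igOf c : IG Y) := by
    show igOf c * igOf c = igOf c
    rw [ig_basic (Or.inl (hidem c)), hidem c]
  refine ⟨c, hidc, ?_⟩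
  have hct : Red (c :: t) := hl ▸ phi_red hcomm a
  have hsa : sigL (c :: t) = (a : WithOne (IG Y)) := hl ▸ sigL_phi hcomm a
  have hca : ((igOf c : IG Y) : WithOne (IG Y)) * (a : WithOne (IG Y)) = a := by
    rw [← hsa, sigL_cons, ← mul_assoc, ← WithOne.coe_mul, hidc]
  -- helper: every element of `S¹` acts on the left through a reduced list
  have helper : ∀ z : WithOne (IG Y), ∃ p : List Y,
      (∀ b : IG Y, ∃ B : IG Y, z * (b : WithOne (IG Y)) = B ∧ phi hcomm B = lmul p (phi hcomm b)) := by
    intro z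
    induction z using WithOne.recOneCoe with
    | one => exact ⟨[], fun b => ⟨b, one_mul _, rfl⟩⟩
    | coe s => exact ⟨phi hcomm s, fun b => ⟨s * b, (WithOne.coe_mul s b).symm, phi_mul hcomm s b⟩⟩
  intro x y
  obtain ⟨px, hx⟩ := helper x
  obtain ⟨py, hy⟩ := helper y
  constructor
  · intro hxy
    obtain ⟨Bx, hBx, hpBx⟩ := hx a
    obtain ⟨By, hBy, hpBy⟩ := hy a
    have hBxy : Bx = By := WithOne.coe_inj.1 (by rw [← hBx, ← hBy, hxy])
    have hll : lmul px (c :: t) = lmul py (c :: t) := by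
      rw [← hl, ← hpBx, ← hpBy, hBxy]
    have hkey := lmul_key hcomm hidem hct hll
    obtain ⟨Bx', hBx', hpBx'⟩ := hx (igOf c)
    obtain ⟨By', hBy', hpBy'⟩ := hy (igOf c)
    rw [phi_igOf] at hpBx' hpBy'
    have : Bx' = By' := by
      have h1 : sigL (phi hcomm Bx') = sigL (phi hcomm By') := by
        rw [hpBx', hpBy', hkey]
      rw [sigL_phi, sigL_phi] at h1
      exact WithOne.coe_inj.1 h1
    rw [hBx', hBy', this]
  · intro hxy
    calc x * (a : WithOne (IG Y)) = x * (↑(igOf c) * ↑a) := by rw [hca]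
      _ = (x * ↑(igOf c)) * ↑a := by rw [mul_assoc]
      _ = (y * ↑(igOf c)) * ↑a := by rw [hxy]
      _ = y * (↑(igOf c) * ↑a) := by rw [mul_assoc]
      _ = y * ↑a := by rw [hca]

/-- The word-reversal map on the free semigroup, landing in `(IG Y)ᵐᵒᵖ`. -/
def Frev : FreeSemigroup Y →ₙ* (IG Y)ᵐᵒᵖ :=
  FreeSemigroup.lift (fun e => MulOpposite.op (igOf e))

theorem Frev_of (e : Y) : Frev (FreeSemigroup.of e) = MulOpposite.op (igOf e) := rfl

include hcomm in
theorem Frev_resp : igCon Y ≤ Con.ker (Frev (Y := Y)) := by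
  apply Con.conGen_le.2
  rintro w₁ w₂ ⟨e, f, hb, rfl, rfl⟩
  show Frev _ = Frev _
  rw [map_mul]
  show Frev (FreeSemigroup.of e) * Frev (FreeSemigroup.of f) = Frev (FreeSemigroup.of (e * f))
  rw [Frev_of, Frev_of, Frev_of, ← MulOpposite.op_mul, ig_basic (basic_symm hb), hcomm]

noncomputable def rv : IG Y → IG Y :=
  fun a => (Con.liftOn a (fun w => (Frev w : (IG Y)ᵐᵒᵖ))
    (fun _ _ h => Frev_resp hcomm h)).unop

theorem rv_coe (w : FreeSemigroup Y) : rv hcomm (↑w) = (Frev w).unop := rfl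

theorem rv_of (e : Y) : rv hcomm (igOf e) = igOf e := rfl

theorem rv_mul (a b : IG Y) : rv hcomm (a * b) = rv hcomm b * rv hcomm a :=
  Con.induction_on₂ a b fun u v => by
    rw [← Con.coe_mul, rv_coe, rv_coe, rv_coe, map_mul, MulOpposite.unop_mul]

theorem rv_rv (a : IG Y) : rv hcomm (rv hcomm a) = a := by
  refine Con.induction_on a ?_
  intro w
  induction w using FreeSemigroup.recOnMul with
  | ih1 e => rfl
  | ih2 u v hu hv =>
    rw [Con.coe_mul, rv_mul, rv_mul, hu, hv]

noncomputable def rhat : WithOne (IG Y) → WithOne (IG Y) :=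
  fun x => WithOne.recOneCoe 1 (fun s => ((rv hcomm s : IG Y) : WithOne (IG Y))) x

theorem rhat_one : rhat hcomm (1 : WithOne (IG Y)) = 1 := WithOne.recOneCoe_one _ _

theorem rhat_coe (s : IG Y) : rhat hcomm (s : WithOne (IG Y)) = ((rv hcomm s : IG Y) : WithOne (IG Y)) :=
  WithOne.recOneCoe_coe _ _ _

theorem rhat_mul (x y : WithOne (IG Y)) :
    rhat hcomm (x * y) = rhat hcomm y * rhat hcomm x := by
  induction x using WithOne.recOneCoe with
  | one => rw [one_mul, rhat_one, mul_one]
  | coe s =>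
    induction y using WithOne.recOneCoe with
    | one => rw [mul_one, rhat_one, one_mul]
    | coe t =>
      rw [← WithOne.coe_mul, rhat_coe, rhat_coe, rhat_coe, rv_mul, WithOne.coe_mul]

theorem rhat_inj {x y : WithOne (IG Y)} (h : rhat hcomm x = rhat hcomm y) : x = y := by
  induction x using WithOne.recOneCoe with
  | one =>
    induction y using WithOne.recOneCoe with
    | one => rfl
    | coe t =>
      rw [rhat_one, rhat_coe] at h
      exact absurd h.symm WithOne.coe_ne_one
  | coe s =>
    induction y using WithOne.recOneCoe with
    | one =>
      rw [rhat_one, rhat_coe] at h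
      exact absurd h WithOne.coe_ne_one
    | coe t =>
      rw [rhat_coe, rhat_coe, WithOne.coe_inj] at h
      rw [← rv_rv hcomm s, h, rv_rv]

include hcomm hidem in
theorem main_L (a : IG Y) : ∃ c : Y, IsIdempotentElem (igOf c : IG Y) ∧ LStar a (igOf c) := by
  obtain ⟨c, hid, hR⟩ := main_R hcomm hidem (rv hcomm a)
  refine ⟨c, hid, ?_⟩
  intro x y
  have key : ∀ z : WithOne (IG Y), ∀ b : IG Y,
      rhat hcomm ((b : WithOne (IG Y)) * z) = rhat hcomm z * ((rv hcomm b : IG Y) : WithOne (IG Y)) := by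
    intro z b
    rw [rhat_mul, rhat_coe]
  constructor
  · intro h
    have h1 := congrArg (rhat hcomm) h
    rw [key, key] at h1
    have h2 := (hR (rhat hcomm x) (rhat hcomm y)).1 h1
    apply rhat_inj hcomm
    rw [key, key, rv_of]
    exact h2
  · intro h
    have h1 := congrArg (rhat hcomm) h
    rw [key, key, rv_of] at h1
    have h2 := (hR (rhat hcomm x) (rhat hcomm y)).2 h1
    apply rhat_inj hcomm
    rw [key, key]
    exact h2

end Model

/-- For any semilattice `Y` (commutative band), `IG Y` is
abundant: every `𝓡*`-class and every `𝓛*`-class contains an idempotent. -/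
theorem IG_semilattice_abundant
    {Y : Type*} [Semigroup Y] (hcomm : ∀ a b : Y, a * b = b * a)
    (hidem : ∀ a : Y, a * a = a) :
    Abundant (IG Y) := by
  intro a
  constructor
  · obtain ⟨c, h1, h2⟩ := main_R hcomm hidem a
    exact ⟨igOf c, h1, h2⟩
  · obtain ⟨c, h1, h2⟩ := main_L hcomm hidem a
    exact ⟨igOf c, h1, h2⟩
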